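/- Given j ∈ ℕ and 0 < δ < 2^{-j}. For any positive integer r ≤ j, there exists a ReLU network φ_r: ℝ → ℝ^{r+1} with width 2^{r+1}+1 and depth 3 such that for every x ∈ Q(j,δ,1) with binary digits x_1, x_2, … one has φ_r(x) = (x_1, …, x_r, Σ_{i≥r+1} 2^{r−i} x_i), i.e. the first r bits of x together with the fractional remainder Bin 0.x_{r+1}x_{r+2}⋯. -/

import Mathlib

open scoped BigOperators ENNReal

noncomputable section

/-- `f` is an affine map `x ↦ A x + b`. -/
def IsAffineMap (din dout : ℕ) (f : (Fin din → ℝ) → (Fin dout → ℝ)) : Prop :=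
  ∃ (A : Matrix (Fin dout) (Fin din) ℝ) (b : Fin dout → ℝ),
    ∀ x i, f x i = (∑ j, A i j * x j) + b i

/-- `ReluNetExact din dout f N L` asserts that `f = T_L ∘ σ ∘ ⋯ ∘ σ ∘ T_1` where each `T_l`
is affine, `σ` is the coordinatewise ReLU `t ↦ max t 0`, all intermediate dimensions are at
most `N` (the width), and there are `L` affine layers (the depth). -/
inductive ReluNetExact : (din dout : ℕ) → ((Fin din → ℝ) → (Fin dout → ℝ)) → ℕ → ℕ → Prop
  | affine {din dout N : ℕ} {f : (Fin din → ℝ) → (Fin dout → ℝ)}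
      (hf : IsAffineMap din dout f) : ReluNetExact din dout f N 1
  | comp {din k dout N L : ℕ} (hk : k ≤ N) {T : (Fin din → ℝ) → (Fin k → ℝ)}
      (hT : IsAffineMap din k T) {g : (Fin k → ℝ) → (Fin dout → ℝ)}
      (hg : ReluNetExact k dout g N L) :
      ReluNetExact din dout (fun x => g (fun i => max (T x i) 0)) N (L + 1)

/-- `f` is representable by a ReLU network with width at most `N` and depth at most `L`. -/
def IsReluNet (din dout : ℕ) (f : (Fin din → ℝ) → (Fin dout → ℝ)) (N L : ℕ) : Prop :=
  ∃ L' ≤ L, ReluNetExact din dout f N L'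

/-- Scalar-valued version of `IsReluNet`. -/
def IsReluNet1 (din : ℕ) (f : (Fin din → ℝ) → ℝ) (N L : ℕ) : Prop :=
  IsReluNet din 1 (fun x _ => f x) N L

/-- The set `Q(j,δ,1) = [0,1) \ ∪_{k=1}^{2^j-1} (k 2^{-j} - δ, k 2^{-j})`. -/
def Q1 (j : ℕ) (δ : ℝ) : Set ℝ :=
  Set.Ico (0:ℝ) 1 \ ⋃ k ∈ Finset.Icc (1 : ℕ) (2 ^ j - 1), Set.Ioo ((k : ℝ) / 2 ^ j - δ) ((k : ℝ) / 2 ^ j)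

/-- The set `Q(j,δ,d)`: every coordinate lies in `Q(j,δ,1)`. -/
def Qd (j d : ℕ) (δ : ℝ) : Set (Fin d → ℝ) := {x | ∀ i, x i ∈ Q1 j δ}

/-- The `i`-th binary digit (`i ≥ 1`) of `x ∈ [0,1)`: `x_i = ⌊2^i x⌋ mod 2`. -/
noncomputable def bdigit (i : ℕ) (x : ℝ) : ℝ := ((⌊(2:ℝ) ^ i * x⌋ % 2 : ℤ) : ℝ)

namespace Stmt5Aux


/-- slope of hidden unit `t` -/
noncomputable def slope (r : ℕ) (δ : ℝ) (t : ℕ) : ℝ :=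
  if t = 0 then 1 else if t + 2 ≤ 2 ^ (r + 1) then 1 / δ else 0

/-- bias of hidden unit `t` -/
noncomputable def bias (r : ℕ) (δ : ℝ) (t : ℕ) : ℝ :=
  if t = 0 then 0
  else if t < 2 ^ r then 1 - ((t : ℝ) / 2 ^ r) / δ
  else if t + 2 ≤ 2 ^ (r + 1) then -(((t + 1 - 2 ^ r : ℕ) : ℝ) / 2 ^ r) / δ
  else 0

def gbit (r i n : ℕ) : ℕ := n / 2 ^ (r - 1 - i) % 2

noncomputable def cval (r i m : ℕ) : ℝ :=
  if i < r then (gbit r i m : ℝ) - (gbit r i (m - 1) : ℝ) else -1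

noncomputable def coef (r i t : ℕ) : ℝ :=
  if t = 0 then (if i = r then (2 : ℝ) ^ r else 0)
  else if t < 2 ^ r then cval r i t
  else if t + 2 ≤ 2 ^ (r + 1) then -cval r i (t + 1 - 2 ^ r)
  else 0

lemma sum_coef (r i : ℕ) (h : ℕ → ℝ) :
    ∑ t : Fin (2 ^ (r + 1) + 1), coef r i t.val * h t.val
      = coef r i 0 * h 0
        + ∑ m ∈ Finset.range (2 ^ r - 1), cval r i (m + 1) * (h (m + 1) - h (m + 2 ^ r)) := by
  have h1 : (1:ℕ) ≤ 2 ^ r := Nat.one_le_two_pow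
  have h2 : (2:ℕ) ^ r ≤ 2 ^ (r+1) - 1 := by
    have : 2 ^ (r+1) = 2 * 2 ^ r := by ring
    omega
  have h3 : 2 ^ (r+1) - 1 ≤ 2 ^ (r+1) + 1 := by omega
  rw [Fin.sum_univ_eq_sum_range (fun k => coef r i k * h k), Finset.range_eq_Ico,
    ← Finset.sum_Ico_consecutive _ (Nat.zero_le (2 ^ (r+1) - 1)) h3,
    ← Finset.sum_Ico_consecutive _ (Nat.zero_le (2 ^ r)) h2,
    ← Finset.sum_Ico_consecutive _ (Nat.zero_le 1) h1]
  have e4 : ∑ t ∈ Finset.Ico (2 ^ (r+1) - 1) (2 ^ (r+1) + 1), coef r i t * h t = 0 := by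
    apply Finset.sum_eq_zero
    intro t ht
    simp only [Finset.mem_Ico] at ht
    have ht0 : t ≠ 0 := by omega
    have ht1 : ¬ t < 2 ^ r := by omega
    have ht2 : ¬ (t + 2 ≤ 2 ^ (r+1)) := by omega
    simp [coef, ht0, ht1, ht2]
  have e1 : ∑ t ∈ Finset.Ico 0 1, coef r i t * h t = coef r i 0 * h 0 := by
    simp
  rw [e1, e4, add_zero, Finset.sum_Ico_eq_sum_range, Finset.sum_Ico_eq_sum_range]
  have l1 : 2 ^ r - 1 = 2 ^ (r+1) - 1 - 2 ^ r := by
    have : 2 ^ (r+1) = 2 * 2 ^ r := by ring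
    omega
  rw [← l1]
  have e2 : ∀ m ∈ Finset.range (2 ^ r - 1),
      coef r i (1 + m) * h (1 + m) = cval r i (m + 1) * h (m + 1) := by
    intro m hm
    simp only [Finset.mem_range] at hm
    have h0 : 1 + m ≠ 0 := by omega
    have hlt : 1 + m < 2 ^ r := by omega
    rw [show 1 + m = m + 1 from by omega] at h0 hlt ⊢
    simp only [coef, if_neg h0, if_pos hlt]
  have e3 : ∀ m ∈ Finset.range (2 ^ r - 1),
      coef r i (2 ^ r + m) * h (2 ^ r + m) = -(cval r i (m + 1) * h (m + 2 ^ r)) := by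
    intro m hm
    simp only [Finset.mem_range] at hm
    have h0 : 2 ^ r + m ≠ 0 := by positivity
    have hlt : ¬ (2 ^ r + m < 2 ^ r) := by omega
    have hle : 2 ^ r + m + 2 ≤ 2 ^ (r+1) := by
      have : 2 ^ (r+1) = 2 * 2 ^ r := by ring
      omega
    have hm1 : 2 ^ r + m + 1 - 2 ^ r = m + 1 := by omega
    simp only [coef, if_neg h0, if_neg hlt, if_pos hle, hm1]
    rw [show 2 ^ r + m = m + 2 ^ r from by omega]
    ring
  rw [Finset.sum_congr rfl e2, Finset.sum_congr rfl e3, add_assoc,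
    ← Finset.sum_add_distrib]
  congr 1
  apply Finset.sum_congr rfl
  intro m hm
  ring


lemma bdigit_nat (i : ℕ) (x : ℝ) (hx0 : 0 ≤ x) :
    bdigit i x = ((⌊(2:ℝ) ^ i * x⌋₊ % 2 : ℕ) : ℝ) := by
  unfold bdigit
  rw [← Int.natCast_floor_eq_floor (by positivity)]
  norm_cast

lemma digit_eq (r i : ℕ) (hi : i < r) (x : ℝ) (hx0 : 0 ≤ x) :
    (gbit r i ⌊(2:ℝ) ^ r * x⌋₊ : ℝ) = bdigit (i + 1) x := by
  have hpow : (2:ℝ) ^ r = 2 ^ (i + 1) * 2 ^ (r - 1 - i) := by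
    rw [← pow_add]; congr 1; omega
  have hdiv : (2:ℝ) ^ r * x / ((2 ^ (r - 1 - i) : ℕ) : ℝ) = 2 ^ (i + 1) * x := by
    have h2 : ((2 ^ (r - 1 - i) : ℕ) : ℝ) = (2:ℝ) ^ (r - 1 - i) := by push_cast; ring
    rw [h2, hpow]
    have : (0:ℝ) < (2:ℝ) ^ (r - 1 - i) := by positivity
    field_simp
  have h1 : ⌊(2:ℝ) ^ (i + 1) * x⌋₊ = ⌊(2:ℝ) ^ r * x⌋₊ / 2 ^ (r - 1 - i) := by
    rw [← hdiv, Nat.floor_div_natCast]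
  rw [bdigit_nat _ _ hx0, h1]
  rfl

lemma sum_digits (r : ℕ) (x : ℝ) (hx0 : 0 ≤ x) (hx1 : x < 1) :
    ∑ i ∈ Finset.Icc 1 r, (2:ℝ) ^ (r - i) * bdigit i x = (⌊(2:ℝ) ^ r * x⌋₊ : ℝ) := by
  have key : ∀ m : ℕ, bdigit (m + 1) x
      = ((⌊(2:ℝ) ^ (m + 1) * x⌋₊ : ℝ)) - 2 * ((⌊(2:ℝ) ^ m * x⌋₊ : ℝ)) := by
    intro m
    have h2 : ⌊(2:ℝ) ^ m * x⌋₊ = ⌊(2:ℝ) ^ (m + 1) * x⌋₊ / 2 := by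
      rw [← Nat.floor_div_natCast ((2:ℝ) ^ (m + 1) * x) 2]
      congr 1
      push_cast
      ring
    rw [bdigit_nat _ _ hx0, h2]
    have hle : 2 * (⌊(2:ℝ) ^ (m + 1) * x⌋₊ / 2) ≤ ⌊(2:ℝ) ^ (m + 1) * x⌋₊ := Nat.mul_div_le _ 2
    have : ⌊(2:ℝ) ^ (m + 1) * x⌋₊ % 2
        = ⌊(2:ℝ) ^ (m + 1) * x⌋₊ - 2 * (⌊(2:ℝ) ^ (m + 1) * x⌋₊ / 2) := by omega
    rw [this, Nat.cast_sub hle]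
    push_cast
    ring
  rw [← Finset.Ico_add_one_right_eq_Icc, Finset.sum_Ico_eq_sum_range,
    show r + 1 - 1 = r from rfl]
  have hterm : ∀ m ∈ Finset.range r, (2:ℝ) ^ (r - (1 + m)) * bdigit (1 + m) x
      = (fun m => (2:ℝ) ^ (r - m) * (⌊(2:ℝ) ^ m * x⌋₊ : ℝ)) (m + 1)
        - (fun m => (2:ℝ) ^ (r - m) * (⌊(2:ℝ) ^ m * x⌋₊ : ℝ)) m := by
    intro m hm
    simp only [Finset.mem_range] at hm
    simp only
    rw [show 1 + m = m + 1 from by omega, key m]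
    have e1 : r - (m + 1) + 1 = r - m := by omega
    have e2 : (2:ℝ) ^ (r - m) = 2 ^ (r - (m + 1)) * 2 := by
      rw [← pow_succ, e1]
    rw [e2]
    ring
  rw [Finset.sum_congr rfl hterm, Finset.sum_range_sub (fun m => (2:ℝ) ^ (r - m) * (⌊(2:ℝ) ^ m * x⌋₊ : ℝ))]
  have h0 : ⌊(2:ℝ) ^ 0 * x⌋₊ = 0 := by
    apply Nat.floor_eq_zero.2
    simpa using hx1
  simp [h0, Nat.sub_self, hx1]

lemma step (j r : ℕ) (hrj : r ≤ j) (δ : ℝ) (hδ0 : 0 < δ)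
    (x : ℝ) (hx : x ∈ Q1 j δ) (m : ℕ) (hm : m < 2 ^ r - 1) :
    max (slope r δ (m + 1) * x + bias r δ (m + 1)) 0
      - max (slope r δ (m + 2 ^ r) * x + bias r δ (m + 2 ^ r)) 0
      = if m + 1 ≤ ⌊(2:ℝ) ^ r * x⌋₊ then 1 else 0 := by
  have hx0 : 0 ≤ x := hx.1.1
  have hx1 : x < 1 := hx.1.2
  have h1 : (1:ℕ) ≤ 2 ^ r := Nat.one_le_two_pow
  have hpow2 : (2:ℕ) ^ (r + 1) = 2 * 2 ^ r := by ring
  -- simplify slopes and biases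
  have hs1 : slope r δ (m + 1) = 1 / δ := by
    have : m + 1 + 2 ≤ 2 ^ (r + 1) := by omega
    simp [slope, this]
  have hs2 : slope r δ (m + 2 ^ r) = 1 / δ := by
    have hne : m + 2 ^ r ≠ 0 := by omega
    have : m + 2 ^ r + 2 ≤ 2 ^ (r + 1) := by omega
    simp [slope, hne, this]
  have hb1 : bias r δ (m + 1) = 1 - (((m:ℝ) + 1) / 2 ^ r) / δ := by
    have : m + 1 < 2 ^ r := by omega
    simp [bias, this]
  have hb2 : bias r δ (m + 2 ^ r) = -(((m:ℝ) + 1) / 2 ^ r) / δ := by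
    have hne : m + 2 ^ r ≠ 0 := by omega
    have hnl : ¬ (m + 2 ^ r < 2 ^ r) := by omega
    have hle : m + 2 ^ r + 2 ≤ 2 ^ (r + 1) := by omega
    have hidx : m + 2 ^ r + 1 - 2 ^ r = m + 1 := by omega
    simp only [bias, if_neg hne, if_neg hnl, if_pos hle, hidx]
    push_cast
    ring
  rw [hs1, hs2, hb1, hb2]
  set c : ℝ := ((m:ℝ) + 1) / 2 ^ r with hc
  have hcpos : 0 < (2:ℝ) ^ r := by positivity
  by_cases hcase : m + 1 ≤ ⌊(2:ℝ) ^ r * x⌋₊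
  · -- x ≥ c, both maxes active
    have hfl : ((m:ℝ) + 1) ≤ (2:ℝ) ^ r * x := by
      have h1' : ((m + 1 : ℕ) : ℝ) ≤ (⌊(2:ℝ) ^ r * x⌋₊ : ℝ) := by exact_mod_cast Nat.cast_le.2 hcase
      have h2' : (⌊(2:ℝ) ^ r * x⌋₊ : ℝ) ≤ (2:ℝ) ^ r * x := Nat.floor_le (by positivity)
      push_cast at h1'
      linarith
    have hxc : c ≤ x := by
      rw [hc, div_le_iff₀ hcpos]
      linarith [hfl]
    have hnn : 0 ≤ (x - c) / δ := div_nonneg (by linarith) hδ0.le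
    have e1 : 1 / δ * x + (1 - c / δ) = (x - c) / δ + 1 := by field_simp; ring
    have e2 : 1 / δ * x + -c / δ = (x - c) / δ := by field_simp; ring
    rw [e1, e2, max_eq_left (by linarith), max_eq_left hnn, if_pos hcase]
    ring
  · -- x < c, and by the Q-condition x ≤ c - δ; both maxes are 0
    have hlt : (2:ℝ) ^ r * x < (m:ℝ) + 1 := by
      have := Nat.lt_floor_add_one ((2:ℝ) ^ r * x)
      have h1' : ⌊(2:ℝ) ^ r * x⌋₊ ≤ m := by omega
      have h2' : (⌊(2:ℝ) ^ r * x⌋₊ : ℝ) ≤ (m:ℝ) := by exact_mod_cast h1'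
      linarith
    have hxc : x < c := by
      rw [hc, lt_div_iff₀ hcpos]
      linarith
    -- the point k/2^j with k = (m+1) * 2^(j-r)
    have hkr : (2:ℕ) ^ (j - r) * 2 ^ r = 2 ^ j := by
      rw [← pow_add]; congr 1; omega
    have hk1 : 1 ≤ (m + 1) * 2 ^ (j - r) := by
      have : (1:ℕ) ≤ 2 ^ (j - r) := Nat.one_le_two_pow
      nlinarith
    have hk2 : (m + 1) * 2 ^ (j - r) ≤ 2 ^ j - 1 := by
      have h2jr : (1:ℕ) ≤ 2 ^ (j - r) := Nat.one_le_two_pow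
      have : (m + 1) * 2 ^ (j - r) ≤ (2 ^ r - 1) * 2 ^ (j - r) := by
        apply Nat.mul_le_mul_right
        omega
      have heq : (2 ^ r - 1) * 2 ^ (j - r) = 2 ^ j - 2 ^ (j - r) := by
        rw [Nat.sub_mul, one_mul, Nat.mul_comm, hkr]
      omega
    have hcval : ((((m + 1) * 2 ^ (j - r) : ℕ)) : ℝ) / 2 ^ j = c := by
      rw [hc]
      have hj : (0:ℝ) < (2:ℝ) ^ j := by positivity
      rw [div_eq_div_iff hj.ne' hcpos.ne']
      push_cast
      have : ((2:ℝ)) ^ (j - r) * 2 ^ r = 2 ^ j := by exact_mod_cast hkr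
      nlinarith [this]
    have hnot : x ∉ Set.Ioo (c - δ) c := by
      intro hmem
      exact hx.2 (Set.mem_iUnion₂.2 ⟨(m + 1) * 2 ^ (j - r), Finset.mem_Icc.2 ⟨hk1, hk2⟩,
        by rw [hcval]; exact hmem⟩)
    have hxle : x ≤ c - δ := by
      by_contra hcon
      exact hnot ⟨by linarith, hxc⟩
    have hneg : (x - c) / δ ≤ -1 := by
      rw [div_le_iff₀ hδ0]
      linarith
    have e1 : 1 / δ * x + (1 - c / δ) = (x - c) / δ + 1 := by field_simp; ring
    have e2 : 1 / δ * x + -c / δ = (x - c) / δ := by field_simp; ring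
    rw [e1, e2, max_eq_right (by linarith), max_eq_right (by linarith), if_neg hcase]
    ring


end Stmt5Aux

/-- Lemma `bit extraction`. -/
theorem stmt5 (j : ℕ) (hj : 0 < j) (δ : ℝ) (hδ0 : 0 < δ) (hδ : δ < ((2:ℝ) ^ j)⁻¹)
    (r : ℕ) (hr0 : 0 < r) (hrj : r ≤ j) :
    ∃ φr : (Fin 1 → ℝ) → (Fin (r + 1) → ℝ),
      IsReluNet 1 (r + 1) φr (2 ^ (r + 1) + 1) 3 ∧
      ∀ x ∈ Q1 j δ,
        (∀ i : Fin r, φr (fun _ => x) i.castSucc = bdigit ((i : ℕ) + 1) x) ∧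
        φr (fun _ => x) (Fin.last r) =
          (2:ℝ) ^ r * x - ∑ i ∈ Finset.Icc 1 r, (2:ℝ) ^ (r - i) * bdigit i x := by
  classical
  refine ⟨fun x => (fun (y : Fin (2 ^ (r + 1) + 1) → ℝ) (i : Fin (r + 1)) =>
      (∑ t, Stmt5Aux.coef r i.val t.val * y t) + 0)
      (fun t => max ((∑ jj, Stmt5Aux.slope r δ t.val * x jj) + Stmt5Aux.bias r δ t.val) 0), ?_, ?_⟩
  · exact ⟨2, by norm_num, ReluNetExact.comp le_rfl
      ⟨fun t _ => Stmt5Aux.slope r δ t.val, fun t => Stmt5Aux.bias r δ t.val, fun _ _ => rfl⟩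
      (ReluNetExact.affine ⟨fun i t => Stmt5Aux.coef r i.val t.val, fun _ => 0, fun _ _ => rfl⟩)⟩
  · intro x hx
    have hx0 : (0:ℝ) ≤ x := hx.1.1
    have hx1 : x < 1 := hx.1.2
    set n := ⌊(2:ℝ) ^ r * x⌋₊ with hn
    have hnlt : n < 2 ^ r := by
      rw [hn]
      refine (Nat.floor_lt (by positivity)).2 ?_
      push_cast
      nlinarith [pow_pos (show (0:ℝ) < 2 by norm_num) r]
    have hval : ∀ i : Fin (r + 1),
        (∑ t : Fin (2 ^ (r + 1) + 1), Stmt5Aux.coef r i.val t.val *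
          max ((∑ jj : Fin 1, Stmt5Aux.slope r δ t.val * (fun _ => x) jj) + Stmt5Aux.bias r δ t.val) 0) + 0
        = Stmt5Aux.coef r i.val 0 * max (Stmt5Aux.slope r δ 0 * x + Stmt5Aux.bias r δ 0) 0
          + ∑ m ∈ Finset.range n, Stmt5Aux.cval r i.val (m + 1) := by
      intro i
      simp only [Fin.sum_univ_one]
      rw [Stmt5Aux.sum_coef r i.val (fun t => max (Stmt5Aux.slope r δ t * x + Stmt5Aux.bias r δ t) 0), add_zero]
      congr 1
      have e1 : ∀ m ∈ Finset.range (2 ^ r - 1),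
          Stmt5Aux.cval r i.val (m + 1) * (max (Stmt5Aux.slope r δ (m + 1) * x + Stmt5Aux.bias r δ (m + 1)) 0
            - max (Stmt5Aux.slope r δ (m + 2 ^ r) * x + Stmt5Aux.bias r δ (m + 2 ^ r)) 0)
          = if m < n then Stmt5Aux.cval r i.val (m + 1) else 0 := by
        intro m hm
        rw [Stmt5Aux.step j r hrj δ hδ0 x hx m (Finset.mem_range.1 hm)]
        by_cases hc : m < n
        · rw [if_pos (by omega), if_pos hc, mul_one]
        · rw [if_neg (by omega), if_neg hc, mul_zero]
      rw [Finset.sum_congr rfl e1,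
        ← Finset.sum_subset (Finset.range_subset_range.2 (show n ≤ 2 ^ r - 1 by omega))
          (fun m _ hm => if_neg (by simp only [Finset.mem_range, not_lt] at hm; omega))]
      exact Finset.sum_congr rfl fun m hm => if_pos (Finset.mem_range.1 hm)
    have h00 : max (Stmt5Aux.slope r δ 0 * x + Stmt5Aux.bias r δ 0) 0 = x := by
      have e1 : Stmt5Aux.slope r δ 0 = 1 := by simp [Stmt5Aux.slope]
      have e2 : Stmt5Aux.bias r δ 0 = 0 := by simp [Stmt5Aux.bias]
      rw [e1, e2, one_mul, add_zero]
      exact max_eq_left hx0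
    constructor
    · intro i
      have hiv : (i.castSucc : ℕ) = (i : ℕ) := rfl
      rw [show (fun (y : Fin (2 ^ (r + 1) + 1) → ℝ) (i : Fin (r + 1)) =>
        (∑ t, Stmt5Aux.coef r i.val t.val * y t) + 0)
        (fun t => max ((∑ jj, Stmt5Aux.slope r δ t.val * (fun _ => x) jj) + Stmt5Aux.bias r δ t.val) 0) i.castSucc
        = (∑ t : Fin (2 ^ (r + 1) + 1), Stmt5Aux.coef r (i.castSucc).val t.val *
          max ((∑ jj : Fin 1, Stmt5Aux.slope r δ t.val * (fun _ => x) jj) + Stmt5Aux.bias r δ t.val) 0) + 0 from rfl,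
        hval i.castSucc]
      have hir : (i : ℕ) < r := i.isLt
      have hcoef0 : Stmt5Aux.coef r (i.castSucc).val 0 = 0 := by
        rw [hiv]
        have hne : (i : ℕ) ≠ r := by omega
        simp [Stmt5Aux.coef, hne]
      rw [hcoef0, zero_mul, zero_add, hiv]
      have hcv : ∀ m ∈ Finset.range n, Stmt5Aux.cval r (i : ℕ) (m + 1)
          = (fun m => (Stmt5Aux.gbit r (i : ℕ) m : ℝ)) (m + 1) - (fun m => (Stmt5Aux.gbit r (i : ℕ) m : ℝ)) m := by
        intro m _
        simp only [Stmt5Aux.cval, if_pos hir, Nat.add_sub_cancel]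
      rw [Finset.sum_congr rfl hcv, Finset.sum_range_sub (fun m => (Stmt5Aux.gbit r (i : ℕ) m : ℝ))]
      have hg0 : Stmt5Aux.gbit r (i : ℕ) 0 = 0 := by simp [Stmt5Aux.gbit]
      rw [hg0, Nat.cast_zero, sub_zero, hn]
      exact Stmt5Aux.digit_eq r (i : ℕ) hir x hx0
    · rw [show (fun (y : Fin (2 ^ (r + 1) + 1) → ℝ) (i : Fin (r + 1)) =>
        (∑ t, Stmt5Aux.coef r i.val t.val * y t) + 0)
        (fun t => max ((∑ jj, Stmt5Aux.slope r δ t.val * (fun _ => x) jj) + Stmt5Aux.bias r δ t.val) 0) (Fin.last r)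
        = (∑ t : Fin (2 ^ (r + 1) + 1), Stmt5Aux.coef r (Fin.last r).val t.val *
          max ((∑ jj : Fin 1, Stmt5Aux.slope r δ t.val * (fun _ => x) jj) + Stmt5Aux.bias r δ t.val) 0) + 0 from rfl,
        hval (Fin.last r), h00]
      have hlv : ((Fin.last r : Fin (r + 1)) : ℕ) = r := rfl
      rw [hlv]
      have hcoef0 : Stmt5Aux.coef r r 0 = (2:ℝ) ^ r := by simp [Stmt5Aux.coef]
      have hcv : ∀ m ∈ Finset.range n, Stmt5Aux.cval r r (m + 1) = -1 := by
        intro m _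
        simp [Stmt5Aux.cval]
      rw [hcoef0, Finset.sum_congr rfl hcv, Finset.sum_const, Finset.card_range,
        Stmt5Aux.sum_digits r x hx0 hx1, ← hn]
      push_cast
      ring
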